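/- arXiv:2101.00684 — 3 statements merged into one kernel-verified Lean document; each statement's English description precedes it below -/
import Mathlib

section
/- Let μ > 0 and let N ≥ 2 be an even integer. Then the recursive sequences satisfy 0 < a_j < √2/μ, 0 < â_j < 1/μ, and 0 < b_j < 1/μ for all j = 1, …, N/2. -/
/-- The recursive sequence `a_j` (with `d_i = 2i`):
`a_j = (d_{N−2j+2} + a_{j−1}μ²)/(d_{N−2j+1}d_{N−2j+2} + a_{j−1}d_{N−2j+1}μ² + μ²)`, `a_0 = 0`. -/
noncomputable def aSeq (μ : ℝ) (N : ℕ) : ℕ → ℝ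
  | 0 => 0
  | j + 1 =>
      (2 * ((N : ℝ) - 2 * ((j : ℝ) + 1) + 2) + aSeq μ N j * μ ^ 2) /
        (2 * ((N : ℝ) - 2 * ((j : ℝ) + 1) + 1) * (2 * ((N : ℝ) - 2 * ((j : ℝ) + 1) + 2)) +
          aSeq μ N j * (2 * ((N : ℝ) - 2 * ((j : ℝ) + 1) + 1)) * μ ^ 2 + μ ^ 2)

/-- The recursive sequence `â_j`:
`â_j = μ/(d_{N−2j+1}d_{N−2j+2} + a_{j−1}d_{N−2j+1}μ² + μ²)`, `â_0 = 0`. -/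
noncomputable def ahatSeq (μ : ℝ) (N : ℕ) : ℕ → ℝ
  | 0 => 0
  | j + 1 =>
      μ / (2 * ((N : ℝ) - 2 * ((j : ℝ) + 1) + 1) * (2 * ((N : ℝ) - 2 * ((j : ℝ) + 1) + 2)) +
          aSeq μ N j * (2 * ((N : ℝ) - 2 * ((j : ℝ) + 1) + 1)) * μ ^ 2 + μ ^ 2)

/-- The recursive sequence `b_j`:
`b_j = (d_{2j−1} + b_{j−1}μ²)/(d_{2j}d_{2j−1} + b_{j−1}d_{2j}μ² + μ²)`, `b_0 = 0`. -/
noncomputable def bSeq (μ : ℝ) : ℕ → ℝ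
  | 0 => 0
  | j + 1 =>
      (2 * (2 * ((j : ℝ) + 1) - 1) + bSeq μ j * μ ^ 2) /
        (2 * (2 * ((j : ℝ) + 1)) * (2 * (2 * ((j : ℝ) + 1) - 1)) +
          bSeq μ j * (2 * (2 * ((j : ℝ) + 1))) * μ ^ 2 + μ ^ 2)

lemma key (c x α β μ : ℝ) (hc : 0 < c) (hx0 : 0 ≤ x) (hx : x < c)
    (hα : 0 < α) (hαβ : α ≤ c^2*β) (hμ : 0 < μ) :
    α*μ + x*μ^2 < c*(α*β + x*β*μ + μ^2) := by
  have hβ : 0 < β := by nlinarith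
  rcases le_or_gt α (c*x*β) with h | h
  · nlinarith [mul_pos hc (mul_pos hα hβ), mul_pos (sub_pos.2 hx) (mul_pos hμ hμ)]
  · nlinarith [sq_nonneg (2*(c-x)*μ + (c*x*β - α)), mul_pos hα hβ,
      mul_nonneg (mul_nonneg hc.le hx0) hβ.le, mul_pos hα hα, sq_nonneg (c*x*β - α)]

lemma aux_a (μ : ℝ) (hμ : 0 < μ) (N : ℕ) (hNe : Even N) :
    ∀ j, j ≤ N/2 → 0 ≤ aSeq μ N j ∧ aSeq μ N j * μ < Real.sqrt 2 := by
  intro j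
  induction j with
  | zero =>
    intro _
    refine ⟨le_of_eq (by simp [aSeq]), ?_⟩
    simp only [aSeq, zero_mul]
    exact Real.sqrt_pos.2 (by norm_num)
  | succ k ih =>
    intro hk
    obtain ⟨m, hm⟩ := hNe
    have hNm : N = 2 * m := by omega
    have hkm : k + 1 ≤ m := by omega
    obtain ⟨ha0, ha1⟩ := ih (by omega)
    set a := aSeq μ N k with ha
    have hs2 : Real.sqrt 2 ^ 2 = 2 := Real.sq_sqrt (by norm_num)
    have hs0 : (0:ℝ) < Real.sqrt 2 := Real.sqrt_pos.2 (by norm_num)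
    set P : ℝ := 2 * ((N : ℝ) - 2 * ((k : ℝ) + 1) + 1) with hP
    have hP2 : 2 ≤ P := by
      have : (2:ℝ) * ((k:ℝ) + 1) ≤ (N:ℝ) := by
        have : ((2 * (k+1) : ℕ) : ℝ) ≤ ((N:ℕ) : ℝ) := Nat.cast_le.2 (by omega)
        push_cast at this; linarith
      rw [hP]; linarith
    have hQ : 2 * ((N : ℝ) - 2 * ((k : ℝ) + 1) + 2) = P + 2 := by rw [hP]; ring
    have hden : 0 < P * (P + 2) + a * P * μ ^ 2 + μ ^ 2 := by
      have := mul_pos hμ hμ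
      nlinarith [mul_nonneg (mul_nonneg ha0 (by linarith : (0:ℝ) ≤ P)) (mul_pos hμ hμ).le]
    have hstep : aSeq μ N (k+1) = (P + 2 + a * μ ^ 2) / (P * (P + 2) + a * P * μ ^ 2 + μ ^ 2) := by
      show (2 * ((N : ℝ) - 2 * ((k : ℝ) + 1) + 2) + a * μ ^ 2) /
        (2 * ((N : ℝ) - 2 * ((k : ℝ) + 1) + 1) * (2 * ((N : ℝ) - 2 * ((k : ℝ) + 1) + 2)) +
          a * (2 * ((N : ℝ) - 2 * ((k : ℝ) + 1) + 1)) * μ ^ 2 + μ ^ 2) = _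
      rw [hQ, ← hP]
    rw [hstep]
    constructor
    · apply div_nonneg _ hden.le
      nlinarith [mul_nonneg ha0 (mul_pos hμ hμ).le]
    · rw [div_mul_eq_mul_div, div_lt_iff₀ hden]
      have hk2 := key (Real.sqrt 2) (a * μ) (P + 2) P μ hs0
        (mul_nonneg ha0 hμ.le) ha1 (by linarith) (by rw [hs2]; linarith) hμ
      nlinarith [hk2]

lemma aux_b (μ : ℝ) (hμ : 0 < μ) :
    ∀ j, 0 ≤ bSeq μ j ∧ bSeq μ j * μ < 1 := by
  intro j
  induction j with
  | zero => simp [bSeq]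
  | succ k ih =>
    obtain ⟨hb0, hb1⟩ := ih
    set b := bSeq μ k with hb
    set U : ℝ := 2 * (2 * ((k : ℝ) + 1) - 1) with hU
    have hU2 : 2 ≤ U := by rw [hU]; have : (0:ℝ) ≤ (k:ℝ) := Nat.cast_nonneg k; linarith
    have hV : 2 * (2 * ((k : ℝ) + 1)) = U + 2 := by rw [hU]; ring
    have hden : 0 < (U + 2) * U + b * (U + 2) * μ ^ 2 + μ ^ 2 := by
      nlinarith [mul_nonneg (mul_nonneg hb0 (by linarith : (0:ℝ) ≤ U + 2)) (mul_pos hμ hμ).le,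
        mul_pos hμ hμ]
    have hstep : bSeq μ (k+1) = (U + b * μ ^ 2) / ((U + 2) * U + b * (U + 2) * μ ^ 2 + μ ^ 2) := by
      show (2 * (2 * ((k : ℝ) + 1) - 1) + b * μ ^ 2) /
        (2 * (2 * ((k : ℝ) + 1)) * (2 * (2 * ((k : ℝ) + 1) - 1)) +
          b * (2 * (2 * ((k : ℝ) + 1))) * μ ^ 2 + μ ^ 2) = _
      rw [hV, ← hU]
    rw [hstep]
    constructor
    · apply div_nonneg _ hden.le
      nlinarith [mul_nonneg hb0 (mul_pos hμ hμ).le]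
    · rw [div_mul_eq_mul_div, div_lt_iff₀ hden]
      have hk2 := key 1 (b * μ) U (U + 2) μ one_pos
        (mul_nonneg hb0 hμ.le) hb1 (by linarith) (by nlinarith) hμ
      nlinarith [hk2]

/-- Bounds `0 < a_j < √2/μ`, `0 < â_j < 1/μ`, `0 < b_j < 1/μ` for `j = 1,…,N/2`. -/
theorem stmt3 (μ : ℝ) (hμ : 0 < μ) (N : ℕ) (hN : 2 ≤ N) (hNe : Even N)
    (j : ℕ) (hj1 : 1 ≤ j) (hj2 : j ≤ N / 2) :
    (0 < aSeq μ N j ∧ aSeq μ N j < Real.sqrt 2 / μ) ∧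
    (0 < ahatSeq μ N j ∧ ahatSeq μ N j < 1 / μ) ∧
    (0 < bSeq μ j ∧ bSeq μ j < 1 / μ) := by
  obtain ⟨k, rfl⟩ : ∃ k, j = k + 1 := ⟨j - 1, by omega⟩
  obtain ⟨ha0, ha1⟩ := aux_a μ hμ N hNe k (by omega)
  obtain ⟨haj0, haj1⟩ := aux_a μ hμ N hNe (k + 1) hj2
  obtain ⟨hbj0, hbj1⟩ := aux_b μ hμ (k + 1)
  obtain ⟨hb0, hb1⟩ := aux_b μ hμ k
  obtain ⟨m, hm⟩ := hNe
  set a := aSeq μ N k with ha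
  set P : ℝ := 2 * ((N : ℝ) - 2 * ((k : ℝ) + 1) + 1) with hP
  have hP2 : 2 ≤ P := by
    have : (2 : ℝ) * ((k : ℝ) + 1) ≤ (N : ℝ) := by
      have : ((2 * (k + 1) : ℕ) : ℝ) ≤ ((N : ℕ) : ℝ) := Nat.cast_le.2 (by omega)
      push_cast at this; linarith
    rw [hP]; linarith
  have hQ : 2 * ((N : ℝ) - 2 * ((k : ℝ) + 1) + 2) = P + 2 := by rw [hP]; ring
  have hden : 0 < P * (P + 2) + a * P * μ ^ 2 + μ ^ 2 := by
    nlinarith [mul_nonneg (mul_nonneg ha0 (by linarith : (0:ℝ) ≤ P)) (mul_pos hμ hμ).le,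
      mul_pos hμ hμ]
  have hstepa : aSeq μ N (k + 1) =
      (P + 2 + a * μ ^ 2) / (P * (P + 2) + a * P * μ ^ 2 + μ ^ 2) := by
    show (2 * ((N : ℝ) - 2 * ((k : ℝ) + 1) + 2) + a * μ ^ 2) /
      (2 * ((N : ℝ) - 2 * ((k : ℝ) + 1) + 1) * (2 * ((N : ℝ) - 2 * ((k : ℝ) + 1) + 2)) +
        a * (2 * ((N : ℝ) - 2 * ((k : ℝ) + 1) + 1)) * μ ^ 2 + μ ^ 2) = _
    rw [hQ, ← hP]
  have hstepah : ahatSeq μ N (k + 1) = μ / (P * (P + 2) + a * P * μ ^ 2 + μ ^ 2) := by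
    show μ / (2 * ((N : ℝ) - 2 * ((k : ℝ) + 1) + 1) * (2 * ((N : ℝ) - 2 * ((k : ℝ) + 1) + 2)) +
        a * (2 * ((N : ℝ) - 2 * ((k : ℝ) + 1) + 1)) * μ ^ 2 + μ ^ 2) = _
    rw [hQ, ← hP]
  set U : ℝ := 2 * (2 * ((k : ℝ) + 1) - 1) with hU
  have hU2 : 2 ≤ U := by rw [hU]; have : (0:ℝ) ≤ (k:ℝ) := Nat.cast_nonneg k; linarith
  have hV : 2 * (2 * ((k : ℝ) + 1)) = U + 2 := by rw [hU]; ring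
  have hdenb : 0 < (U + 2) * U + bSeq μ k * (U + 2) * μ ^ 2 + μ ^ 2 := by
    nlinarith [mul_nonneg (mul_nonneg hb0 (by linarith : (0:ℝ) ≤ U + 2)) (mul_pos hμ hμ).le,
      mul_pos hμ hμ]
  have hstepb : bSeq μ (k + 1) =
      (U + bSeq μ k * μ ^ 2) / ((U + 2) * U + bSeq μ k * (U + 2) * μ ^ 2 + μ ^ 2) := by
    show (2 * (2 * ((k : ℝ) + 1) - 1) + bSeq μ k * μ ^ 2) /
      (2 * (2 * ((k : ℝ) + 1)) * (2 * (2 * ((k : ℝ) + 1) - 1)) +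
        bSeq μ k * (2 * (2 * ((k : ℝ) + 1))) * μ ^ 2 + μ ^ 2) = _
    rw [hV, ← hU]
  refine ⟨⟨?_, ?_⟩, ⟨?_, ?_⟩, ?_, ?_⟩
  · rw [hstepa]
    apply div_pos _ hden
    nlinarith [mul_nonneg ha0 (mul_pos hμ hμ).le]
  · rw [lt_div_iff₀ hμ]; exact haj1
  · rw [hstepah]; exact div_pos hμ hden
  · rw [hstepah, div_lt_div_iff₀ hden hμ]
    nlinarith [mul_nonneg (mul_nonneg ha0 (by linarith : (0:ℝ) ≤ P)) (mul_pos hμ hμ).le]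
  · rw [hstepb]
    apply div_pos _ hdenb
    nlinarith [mul_nonneg hb0 (mul_pos hμ hμ).le]
  · rw [lt_div_iff₀ hμ]; exact hbj1
end

section
/- Let μ > 0, let p > 0 be an integer, and let N ≥ 2 be an even integer with N > 2^p·μ. Then for every j with 1 ≤ j ≤ N/2 such that N − 2j + 1 ≥ 2^p·μ, the recursive sequences satisfy a_j ≤ 1/(2^{p+1}μ), b_{N/2−j+1} ≤ 1/(2^{p+1}μ), and â_j ≤ 1/((2^{2p+2} + 1)μ). -/
lemma bSeq_nonneg (μ : ℝ) : ∀ k, 0 ≤ bSeq μ k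
  | 0 => le_refl 0
  | (k+1) => by
    have ih := bSeq_nonneg μ k
    have hk : (0:ℝ) ≤ (k:ℝ) := Nat.cast_nonneg k
    unfold bSeq
    apply div_nonneg
    · nlinarith [sq_nonneg μ, mul_nonneg ih (sq_nonneg μ)]
    · nlinarith [sq_nonneg μ, mul_nonneg ih (sq_nonneg μ), mul_nonneg (mul_nonneg ih hk) (sq_nonneg μ)]

lemma bSeq_le (μ : ℝ) (hμ : 0 < μ) (k : ℕ) :
    bSeq μ (k+1) ≤ 1 / (4 * ((k:ℝ)+1)) := by
  have ih := bSeq_nonneg μ k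
  have hk : (0:ℝ) ≤ (k:ℝ) := Nat.cast_nonneg k
  have hμ2 : (0:ℝ) < μ^2 := by positivity
  unfold bSeq
  rw [div_le_div_iff₀ (by nlinarith [mul_nonneg (mul_nonneg ih hk) (sq_nonneg μ), mul_nonneg ih (sq_nonneg μ)]) (by positivity)]
  nlinarith [mul_nonneg (mul_nonneg ih hk) (sq_nonneg μ), mul_nonneg ih (sq_nonneg μ)]

lemma aSeq_nonneg (μ : ℝ) (N : ℕ) (j : ℕ) (h : 2*((j:ℝ)) ≤ (N:ℝ) + 1) :
    0 ≤ aSeq μ N j := by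
  induction j with
  | zero => simp [aSeq]
  | succ j ih =>
    have h' : 2*((j:ℝ)) ≤ (N:ℝ) + 1 := by push_cast at h ⊢; linarith
    have ihj := ih h'
    have hD1 : (0:ℝ) ≤ 2 * ((N:ℝ) - 2*((j:ℝ)+1) + 1) := by push_cast at h; linarith
    have hD2 : (0:ℝ) ≤ 2 * ((N:ℝ) - 2*((j:ℝ)+1) + 2) := by push_cast at h; linarith
    show 0 ≤ (2 * ((N : ℝ) - 2 * ((j : ℝ) + 1) + 2) + aSeq μ N j * μ ^ 2) /
        (2 * ((N : ℝ) - 2 * ((j : ℝ) + 1) + 1) * (2 * ((N : ℝ) - 2 * ((j : ℝ) + 1) + 2)) +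
          aSeq μ N j * (2 * ((N : ℝ) - 2 * ((j : ℝ) + 1) + 1)) * μ ^ 2 + μ ^ 2)
    apply div_nonneg
    · nlinarith [mul_nonneg ihj (sq_nonneg μ)]
    · nlinarith [mul_nonneg hD1 hD2, mul_nonneg (mul_nonneg ihj hD1) (sq_nonneg μ), sq_nonneg μ]

/-- Decay bounds for `a_j`, `b_{N/2−j+1}`, `â_j` in the diagonally dominant regime
`N − 2j + 1 ≥ 2^p μ`. -/
theorem stmt4 (μ : ℝ) (hμ : 0 < μ) (p : ℕ) (hp : 0 < p) (N : ℕ) (hN : 2 ≤ N) (hNe : Even N)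
    (hNμ : (2 : ℝ) ^ p * μ < (N : ℝ))
    (j : ℕ) (hj1 : 1 ≤ j) (hj2 : j ≤ N / 2)
    (hcond : (2 : ℝ) ^ p * μ ≤ (N : ℝ) - 2 * (j : ℝ) + 1) :
    aSeq μ N j ≤ 1 / ((2 : ℝ) ^ (p + 1) * μ) ∧
    bSeq μ (N / 2 - j + 1) ≤ 1 / ((2 : ℝ) ^ (p + 1) * μ) ∧
    ahatSeq μ N j ≤ 1 / (((2 : ℝ) ^ (2 * p + 2) + 1) * μ) := by
  obtain ⟨j', rfl⟩ : ∃ j'', j = j'' + 1 := ⟨j - 1, (Nat.succ_pred_eq_of_pos hj1).symm⟩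
  have hq0 : (0:ℝ) < (2:ℝ)^p := by positivity
  set q : ℝ := (2:ℝ)^p with hq
  have hqμ : (0:ℝ) < q * μ := by positivity
  have hq1 : (2:ℝ)^(p+1) = 2 * q := by rw [hq, pow_succ]; ring
  have hq2 : (2:ℝ)^(2*p+2) = 4 * q^2 := by
    rw [hq, show 2*p+2 = p + p + 2 by ring, pow_add, pow_add]; ring
  have hcond' : q * μ ≤ (N:ℝ) - 2*((j':ℝ)+1) + 1 := by push_cast at hcond ⊢; linarith
  have ha : 0 ≤ aSeq μ N j' := by
    apply aSeq_nonneg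
    have : (0:ℝ) ≤ (j':ℝ) := Nat.cast_nonneg j'
    nlinarith [hcond', hqμ]
  have hμ2 : (0:ℝ) < μ^2 := by positivity
  set a : ℝ := aSeq μ N j' with haa
  set c : ℝ := (N:ℝ) - 2*((j':ℝ)+1) + 1 with hc
  have hc0 : (0:ℝ) < c := lt_of_lt_of_le hqμ hcond'
  have e1 : ((N:ℝ) - 2*((j':ℝ)+1) + 1) = c := hc.symm
  have e2 : ((N:ℝ) - 2*((j':ℝ)+1) + 2) = c + 1 := by rw [hc]; ring
  have hden : (0:ℝ) < 2 * c * (2 * (c+1)) + a * (2 * c) * μ ^ 2 + μ ^ 2 := by positivity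
  refine ⟨?_, ?_, ?_⟩
  · -- a bound
    show (2 * ((N : ℝ) - 2 * ((j' : ℝ) + 1) + 2) + a * μ ^ 2) /
        (2 * ((N : ℝ) - 2 * ((j' : ℝ) + 1) + 1) * (2 * ((N : ℝ) - 2 * ((j' : ℝ) + 1) + 2)) +
          a * (2 * ((N : ℝ) - 2 * ((j' : ℝ) + 1) + 1)) * μ ^ 2 + μ ^ 2) ≤ 1 / ((2:ℝ)^(p+1) * μ)
    rw [e1, e2, hq1, div_le_div_iff₀ hden (by positivity)]
    have hX : (0:ℝ) ≤ 2*(c+1) + a*μ^2 := by positivity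
    have key : (2*(c+1) + a*μ^2) * (2*q*μ) ≤ (2*(c+1) + a*μ^2) * (2*c) :=
      mul_le_mul_of_nonneg_left (by linarith) hX
    nlinarith [key]
  · -- b bound
    obtain ⟨m, hm⟩ := hNe
    have hhalf : N / 2 = m := by omega
    rw [hhalf] at hj2 ⊢
    set k : ℕ := m - (j'+1) with hkk
    have hk1 : m - (j'+1) + 1 = k + 1 := rfl
    have hkc : (k:ℝ) = (m:ℝ) - ((j':ℝ)+1) := by
      rw [hkk]; push_cast [Nat.cast_sub hj2]; ring
    have hNm : (N:ℝ) = 2*(m:ℝ) := by rw [hm]; push_cast; ring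
    calc bSeq μ (m - (j'+1) + 1) ≤ 1 / (4 * ((k:ℝ)+1)) := bSeq_le μ hμ k
      _ ≤ 1 / ((2:ℝ)^(p+1) * μ) := by
          rw [hq1]
          apply one_div_le_one_div_of_le (by positivity)
          rw [hkc]
          have h5 : q * μ ≤ 2*(m:ℝ) - 2*((j':ℝ)+1) + 1 := by
            have := hcond'; rw [hc, hNm] at this; linarith [this]
          linarith
  · -- ahat bound
    show μ / (2 * ((N : ℝ) - 2 * ((j' : ℝ) + 1) + 1) * (2 * ((N : ℝ) - 2 * ((j' : ℝ) + 1) + 2)) +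
          a * (2 * ((N : ℝ) - 2 * ((j' : ℝ) + 1) + 1)) * μ ^ 2 + μ ^ 2) ≤
        1 / (((2:ℝ)^(2*p+2) + 1) * μ)
    rw [e1, e2, hq2, div_le_div_iff₀ hden (by positivity)]
    have h2c : 2*q*μ ≤ 2*c := by linarith
    have h2c1 : 2*q*μ ≤ 2*(c+1) := by linarith
    have key : (2*q*μ) * (2*q*μ) ≤ (2*c) * (2*(c+1)) :=
      mul_le_mul h2c h2c1 (by positivity) (by linarith)
    have h2 : (0:ℝ) ≤ a * (2*c) * μ^2 := by positivity
    nlinarith [key, h2]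
end

section
/- Let T be an invertible N×N real tridiagonal matrix whose subdiagonal and superdiagonal entries satisfy T_{j+1,j} = −T_{j,j+1} for all j, and whose entries outside the three central diagonals are zero. Then for all indices 1 ≤ j ≤ N and integers i > 0 for which the indices are valid (j + 2i + 1 ≤ N, respectively 1 ≤ j − 2i + 1): (T⁻¹)_{j+2i, j} = (T⁻¹)_{j, j+2i}, (T⁻¹)_{j+2i+1, j} = −(T⁻¹)_{j, j+2i+1}, (T⁻¹)_{j−2i, j} = (T⁻¹)_{j, j−2i}, and (T⁻¹)_{j−2i+1, j} = −(T⁻¹)_{j, j−2i+1}. -/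
open Matrix


/-- Symmetry relations for the inverse of an invertible tridiagonal matrix whose
off-diagonal entries are antisymmetric (`T_{j+1,j} = −T_{j,j+1}`).  Indices are 0-based:
the 0-based index `j` corresponds to the 1-based index `j+1` of the paper. -/
theorem stmt7 (N : ℕ) (T : Matrix (Fin N) (Fin N) ℝ)
    (htri : ∀ i j : Fin N, ((i : ℕ) + 2 ≤ (j : ℕ) ∨ (j : ℕ) + 2 ≤ (i : ℕ)) → T i j = 0)
    (hanti : ∀ i j : Fin N, (j : ℕ) = (i : ℕ) + 1 → T j i = -T i j)
    (hinv : IsUnit T) :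
    ∀ j : ℕ, ∀ hj : j < N, ∀ i : ℕ, ∀ _hi : 1 ≤ i,
      (∀ h : j + 2 * i < N,
        T⁻¹ ⟨j + 2 * i, h⟩ ⟨j, hj⟩ = T⁻¹ ⟨j, hj⟩ ⟨j + 2 * i, h⟩) ∧
      (∀ h : j + 2 * i + 1 < N,
        T⁻¹ ⟨j + 2 * i + 1, h⟩ ⟨j, hj⟩ = -T⁻¹ ⟨j, hj⟩ ⟨j + 2 * i + 1, h⟩) ∧
      (∀ _h : 2 * i ≤ j,
        T⁻¹ ⟨j - 2 * i, by omega⟩ ⟨j, hj⟩ = T⁻¹ ⟨j, hj⟩ ⟨j - 2 * i, by omega⟩) ∧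
      (∀ _h : 2 * i ≤ j + 1,
        T⁻¹ ⟨j + 1 - 2 * i, by omega⟩ ⟨j, hj⟩ = -T⁻¹ ⟨j, hj⟩ ⟨j + 1 - 2 * i, by omega⟩) := by
  set D : Matrix (Fin N) (Fin N) ℝ :=
    Matrix.diagonal (fun i => (-1 : ℝ) ^ (i : ℕ)) with hD
  have hDD : D * D = 1 := by
    rw [hD, Matrix.diagonal_mul_diagonal]
    convert Matrix.diagonal_one
    rw [← pow_add]
    exact Even.neg_one_pow ⟨_, rfl⟩
  have hDinv : D⁻¹ = D := Matrix.inv_eq_right_inv hDD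
  have hDTD : D * T * D = Tᵀ := by
    ext a b
    rw [hD]
    simp only [Matrix.diagonal_mul, Matrix.mul_diagonal, Matrix.transpose_apply]
    rcases lt_trichotomy (a : ℕ) (b : ℕ) with hab | hab | hab
    · rcases Nat.lt_or_ge ((a : ℕ) + 1) (b : ℕ) with h2 | h2
      · rw [htri a b (Or.inl (by omega)), htri b a (Or.inr (by omega))]; ring
      · have hb : (b : ℕ) = (a : ℕ) + 1 := by omega
        rw [hanti a b hb, hb, pow_succ]
        ring_nf
        rw [pow_mul, sq, ← pow_add, Even.neg_one_pow ⟨_, rfl⟩, mul_one]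
    · have : a = b := Fin.ext hab
      subst this
      have : Even ((a : ℕ) + (a : ℕ)) := ⟨_, rfl⟩
      rw [mul_comm, ← mul_assoc, ← pow_add, this.neg_one_pow, one_mul]
    · rcases Nat.lt_or_ge ((b : ℕ) + 1) (a : ℕ) with h2 | h2
      · rw [htri a b (Or.inr (by omega)), htri b a (Or.inl (by omega))]; ring
      · have ha : (a : ℕ) = (b : ℕ) + 1 := by omega
        rw [hanti b a ha, ha, pow_succ]
        ring_nf
        rw [pow_mul, sq, ← pow_add, Even.neg_one_pow ⟨_, rfl⟩, mul_one]
  have key : ∀ a b : Fin N,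
      T⁻¹ a b = (-1 : ℝ) ^ ((a : ℕ) + (b : ℕ)) * T⁻¹ b a := by
    have h1 : (T⁻¹)ᵀ = D * T⁻¹ * D := by
      rw [Matrix.transpose_nonsing_inv, ← hDTD, Matrix.mul_inv_rev,
        Matrix.mul_inv_rev, hDinv, mul_assoc]
    intro a b
    have h2 := congrFun (congrFun h1 b) a
    simp only [Matrix.transpose_apply, hD, Matrix.diagonal_mul,
      Matrix.mul_diagonal] at h2
    rw [h2, pow_add]; ring
  intro j hj i hi
  refine ⟨fun h => ?_, fun h => ?_, fun h => ?_, fun h => ?_⟩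
  · rw [key]
    have : Even (j + 2 * i + j) := ⟨j + i, by ring⟩
    rw [this.neg_one_pow, one_mul]
  · rw [key]
    have : Odd (j + 2 * i + 1 + j) := ⟨j + i, by ring⟩
    rw [this.neg_one_pow, neg_one_mul]
  · rw [key]
    have : Even (j - 2 * i + j) := ⟨j - i, by omega⟩
    rw [this.neg_one_pow, one_mul]
  · rw [key]
    have : Odd (j + 1 - 2 * i + j) := ⟨j - i, by omega⟩
    rw [this.neg_one_pow, neg_one_mul]
end
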